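/- For any permutation p of {1,...,n} in which the values 1 and 2 are not positionally adjacent, after at most n-1 applications of SC_231, the values 1 and 2 become positionally adjacent; i.e., SC_231^(n-1)(p) has 1 and 2 adjacent. -/

import Mathlib

/-- One step-by-step implementation of the `SC_231` stack-sorting machine.
`sc231Aux input stack out`: the next input entry is pushed onto the stack unless
pushing it would create a consecutive occurrence of the pattern `231` read from
top to bottom among the stack entries (i.e. the incoming `x` on top of `y`, `z`
with `z < x < y`), in which case the top of the stack is popped and appended to
the output; once the input is exhausted the remaining stack entries are popped. -/
def sc231Aux : List ℕ → List ℕ → List ℕ → List ℕ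
  | [], stack, out => out ++ stack
  | x :: rest, y :: z :: s, out =>
      if z < x ∧ x < y then sc231Aux (x :: rest) (z :: s) (out ++ [y])
      else sc231Aux rest (x :: y :: z :: s) out
  | x :: rest, stack, out => sc231Aux rest (x :: stack) out
termination_by input stack _ => 2 * input.length + stack.length
decreasing_by all_goals (simp; try omega)

/-- The consecutive-pattern-avoiding stack sort map `SC_231`. -/
def SC231 (p : List ℕ) : List ℕ := sc231Aux p [] []

/-- The list of entries that are *pre-popped* while `SC_231` processes the
input, i.e. popped while input entries still remain. -/
def prePopsAux : List ℕ → List ℕ → List ℕ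
  | [], _ => []
  | x :: rest, y :: z :: s =>
      if z < x ∧ x < y then y :: prePopsAux (x :: rest) (z :: s)
      else prePopsAux rest (x :: y :: z :: s)
  | x :: rest, stack => prePopsAux rest (x :: stack)
termination_by input stack => 2 * input.length + stack.length
decreasing_by all_goals (simp; try omega)

def prePops (p : List ℕ) : List ℕ := prePopsAux p []

/-- `p` has a peak: an interior position whose entry exceeds both neighbours. -/
def HasPeak (p : List ℕ) : Prop :=
  ∃ i, i + 2 < p.length ∧ p[i]! < p[i+1]! ∧ p[i+2]! < p[i+1]!

/-- `p` is a permutation of `{1, …, n}` (written as a list of its entries). -/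
def IsPermOf (n : ℕ) (p : List ℕ) : Prop := p.Perm (List.range' 1 n)

/-- `p` contains the (classical) pattern `q`. -/
def ContainsPat (p q : List ℕ) : Prop :=
  ∃ s : List ℕ, s.Sublist p ∧ s.length = q.length ∧
    ∀ i j, i < s.length → j < s.length → (s[i]! < s[j]! ↔ q[i]! < q[j]!)

def AvoidsPat (p q : List ℕ) : Prop := ¬ ContainsPat p q

/-- The sort-number of `p`: the least `k` with `SC_231^k(p)` peakless. -/
noncomputable def sortNum (p : List ℕ) : ℕ := sInf {k | ¬ HasPeak (SC231^[k] p)}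

/-- The values `1` and `2` are positionally adjacent in `p`. -/
def Adj12 (p : List ℕ) : Prop :=
  p.idxOf 1 + 1 = p.idxOf 2 ∨ p.idxOf 2 + 1 = p.idxOf 1
namespace SCwork

/-- entries popped while inserting `x` onto the stack -/
def popA (x : ℕ) : List ℕ → List ℕ
  | y :: z :: s => if z < x ∧ x < y then y :: popA x (z :: s) else []
  | _ => []

/-- remaining stack (below the new `x`) after inserting `x` -/
def remA (x : ℕ) : List ℕ → List ℕ
  | y :: z :: s => if z < x ∧ x < y then remA x (z :: s) else y :: z :: s
  | st => st

def outsL : List ℕ → List ℕ → List ℕ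
  | [], _ => []
  | x :: l, st => popA x st ++ outsL l (x :: remA x st)

def finSt : List ℕ → List ℕ → List ℕ
  | [], st => st
  | x :: l, st => finSt l (x :: remA x st)

lemma popA_append_remA (x : ℕ) : ∀ st, popA x st ++ remA x st = st := by
  intro st
  induction st with
  | nil => simp [popA, remA]
  | cons y t ih =>
    match t with
    | [] => simp [popA, remA]
    | z :: s =>
      by_cases h : z < x ∧ x < y
      · simpa [popA, remA, h] using ih
      · simp [popA, remA, h]

lemma run_cons (x : ℕ) (l : List ℕ) : ∀ st out,
    sc231Aux (x :: l) st out = sc231Aux l (x :: remA x st) (out ++ popA x st) := by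
  intro st
  induction st with
  | nil => intro out; simp [sc231Aux, remA, popA]
  | cons y t ih =>
    intro out
    match t with
    | [] => simp [sc231Aux, remA, popA]
    | z :: s =>
      by_cases h : z < x ∧ x < y
      · rw [sc231Aux]
        simp only [h, if_true, remA, popA, ih]
        simp [remA, popA, h]
      · rw [sc231Aux]
        simp [remA, popA, h, sc231Aux]

lemma run_eq (l : List ℕ) : ∀ st out,
    sc231Aux l st out = out ++ outsL l st ++ finSt l st := by
  induction l with
  | nil => intro st out; simp [sc231Aux, outsL, finSt]
  | cons x l ih =>
    intro st out
    rw [run_cons, ih]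
    simp [outsL, finSt]

lemma SC231_eq (p : List ℕ) : SC231 p = outsL p [] ++ finSt p [] := by
  simp [SC231, run_eq]

lemma perm_run (l : List ℕ) : ∀ st, (outsL l st ++ finSt l st).Perm (l ++ st) := by
  induction l with
  | nil => intro st; simp [outsL, finSt]
  | cons x l ih =>
    intro st
    simp only [outsL, finSt, List.append_assoc]
    refine (((ih _).append_left (popA x st)).trans ?_)
    have h1 : (l ++ x :: remA x st).Perm (x :: (l ++ remA x st)) :=
      List.perm_middle
    refine ((h1.append_left (popA x st)).trans ?_)
    have h2 : (popA x st ++ x :: (l ++ remA x st)).Perm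
        (x :: (popA x st ++ (l ++ remA x st))) := List.perm_middle
    refine h2.trans ?_
    refine List.Perm.cons x ?_
    have h3 : (popA x st ++ (l ++ remA x st)).Perm (l ++ (popA x st ++ remA x st)) := by
      rw [← List.append_assoc, ← List.append_assoc]
      exact (List.perm_append_comm).append_right _
    simpa [popA_append_remA] using h3
lemma SC231_perm (p : List ℕ) : (SC231 p).Perm p := by
  have := perm_run p []
  simpa [SC231_eq] using this

lemma mem_finSt {a : ℕ} {l st : List ℕ} (h : a ∈ finSt l st) : a ∈ l ++ st :=
  (perm_run l st).subset (by simp [h])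

lemma mem_outsL {a : ℕ} {l st : List ℕ} (h : a ∈ outsL l st) : a ∈ l ++ st :=
  (perm_run l st).subset (by simp [h])

lemma mem_remA {a x : ℕ} {st : List ℕ} (h : a ∈ remA x st) : a ∈ st := by
  rw [← popA_append_remA x st]; simp [h]

lemma mem_popA {a x : ℕ} {st : List ℕ} (h : a ∈ popA x st) : a ∈ st := by
  rw [← popA_append_remA x st]; simp [h]

lemma popA_ge3 {x : ℕ} : ∀ {st : List ℕ}, (∀ a ∈ st, 1 ≤ a) →
    ∀ c ∈ popA x st, 3 ≤ c := by
  intro st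
  induction st with
  | nil => intro _ c hc; simp [popA] at hc
  | cons y t ih =>
    intro hst c hc
    match t with
    | [] => simp [popA] at hc
    | z :: s =>
      by_cases h : z < x ∧ x < y
      · simp only [popA, h, and_self, if_true, List.mem_cons] at hc
        rcases hc with h1 | hc
        · have hz : 1 ≤ z := hst z (by simp)
          subst h1; omega
        · exact ih (fun a ha => hst a (List.mem_cons_of_mem _ ha)) c hc
      · simp [popA, h] at hc

lemma outsL_ge3 : ∀ (l : List ℕ) (st : List ℕ), (∀ a ∈ l, 1 ≤ a) → (∀ a ∈ st, 1 ≤ a) →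
    ∀ c ∈ outsL l st, 3 ≤ c := by
  intro l
  induction l with
  | nil => intro st _ _ c hc; simp [outsL] at hc
  | cons x l ih =>
    intro st hl hst c hc
    simp only [outsL, List.mem_append] at hc
    rcases hc with hc | hc
    · exact popA_ge3 hst c hc
    · refine ih _ (fun a ha => hl a (by simp [ha])) ?_ c hc
      intro a ha
      rcases List.mem_cons.1 ha with h1 | ha
      · subst h1; exact hl a (by simp)
      · exact hst a (mem_remA ha)
lemma remA_block {b : ℕ} (hb : b ≤ 2) {r : List ℕ} (hr : ∀ a ∈ r, 1 ≤ a) (x : ℕ) :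
    ∀ st : List ℕ, ∃ st', remA x (st ++ b :: r) = st' ++ b :: r ∧ st'.Sublist st := by
  intro st
  induction st with
  | nil =>
    refine ⟨[], ?_, by simp⟩
    match r with
    | [] => simp [remA]
    | z :: s =>
      have : ¬ (z < x ∧ x < b) := by
        have := hr z (by simp)
        intro hcon; omega
      simp [remA, this]
  | cons y t ih =>
    match t with
    | [] =>
      match r with
      | [] =>
        by_cases h : b < x ∧ x < y
        · exact ⟨[], by simp [remA, h], by simp⟩
        · exact ⟨[y], by simp [remA, h], by simp⟩
      | z :: s =>
        by_cases h : b < x ∧ x < y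
        · simp only [List.cons_append, List.nil_append, remA, h, and_self, if_true]
          have : ¬ (z < x ∧ x < b) := by
            have := hr z (by simp)
            intro hcon; omega
          exact ⟨[], by simp [remA, this], by simp⟩
        · exact ⟨[y], by simp [remA, h], by simp⟩
    | w :: t' =>
      by_cases h : w < x ∧ x < y
      · obtain ⟨st', h1, h2⟩ := ih
        exact ⟨st', by simpa [remA, h] using h1, h2.cons _⟩
      · exact ⟨y :: w :: t', by simp [remA, h], List.Sublist.refl _⟩

lemma remA_split {b : ℕ} (hb : b ≤ 2) {r : List ℕ} (hr : ∀ a ∈ r, 1 ≤ a) (x : ℕ) :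
    ∀ st : List ℕ, remA x (st ++ b :: r) = remA x (st ++ [b]) ++ r ∧
      popA x (st ++ b :: r) = popA x (st ++ [b]) := by
  intro st
  induction st with
  | nil =>
    match r with
    | [] => simp
    | z :: s =>
      have : ¬ (z < x ∧ x < b) := by
        have := hr z (by simp); intro hcon; omega
      simp [remA, popA, this]
  | cons y t ih =>
    match t with
    | [] =>
      match r with
      | [] => simp
      | z :: s =>
        by_cases h : b < x ∧ x < y
        · have hz : ¬ (z < x ∧ x < b) := by
            have := hr z (by simp); intro hcon; omega
          simp [remA, popA, h, hz]
        · simp [remA, popA, h]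
    | w :: t' =>
      by_cases h : w < x ∧ x < y
      · obtain ⟨h1, h2⟩ := ih
        simp only [List.cons_append] at *
        rw [remA, remA, popA, popA, if_pos h, if_pos h, if_pos h, if_pos h]
        exact ⟨h1, by rw [h2]⟩
      · simp [remA, popA, h]

lemma split_lemma {b : ℕ} (hb : b ≤ 2) {r : List ℕ} (hr : ∀ a ∈ r, 1 ≤ a) :
    ∀ (l : List ℕ) (st : List ℕ),
      outsL l (st ++ b :: r) = outsL l (st ++ [b]) ∧
      finSt l (st ++ b :: r) = finSt l (st ++ [b]) ++ r := by
  intro l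
  induction l with
  | nil => intro st; simp [outsL, finSt]
  | cons x l ih =>
    intro st
    obtain ⟨h2, h1⟩ := remA_split hb hr x st
    obtain ⟨st', h3, _⟩ := remA_block (r := []) hb (by simp) x st
    have hst : x :: remA x (st ++ b :: r) = (x :: st') ++ b :: r := by
      rw [h2, h3]; simp
    have hstb : x :: remA x (st ++ [b]) = (x :: st') ++ [b] := by rw [h3]; rfl
    refine ⟨?_, ?_⟩
    · simp only [outsL, h1, hst, hstb, (ih (x :: st')).1]
    · simp only [finSt, hst, hstb, (ih (x :: st')).2]

lemma keeps {b : ℕ} (hb : b ≤ 2) :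
    ∀ (l : List ℕ) (st : List ℕ), ∃ T, finSt l (st ++ [b]) = T ++ [b] ∧
      ∀ a ∈ T, a ∈ l ++ st := by
  intro l
  induction l with
  | nil => intro st; exact ⟨st, rfl, by simp⟩
  | cons x l ih =>
    intro st
    obtain ⟨st', h3, hsub⟩ := remA_block hb (r := []) (by simp) x st
    have hstb : x :: remA x (st ++ [b]) = (x :: st') ++ [b] := by rw [h3]; rfl
    obtain ⟨T, hT, hTm⟩ := ih (x :: st')
    refine ⟨T, ?_, ?_⟩
    · simp only [finSt, hstb]
      exact hT
    · intro a ha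
      have := hTm a ha
      simp only [List.mem_append, List.mem_cons] at this ⊢
      rcases this with h | h
      · exact Or.inl (Or.inr h)
      · rcases h with h | h
        · exact Or.inl (Or.inl h)
        · exact Or.inr (hsub.subset h)

lemma outsL_append (l₁ l₂ st : List ℕ) :
    outsL (l₁ ++ l₂) st = outsL l₁ st ++ outsL l₂ (finSt l₁ st) := by
  induction l₁ generalizing st with
  | nil => simp [outsL, finSt]
  | cons x l ih => simp [outsL, finSt, ih]

lemma finSt_append (l₁ l₂ st : List ℕ) :
    finSt (l₁ ++ l₂) st = finSt l₂ (finSt l₁ st) := by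
  induction l₁ generalizing st with
  | nil => simp [finSt]
  | cons x l ih => simp [finSt, ih]

lemma len_eq (l : List ℕ) : ∀ st, (outsL l st).length + (finSt l st).length
    = l.length + st.length := by
  induction l with
  | nil => intro st; simp [outsL, finSt]
  | cons x l ih =>
    intro st
    have h := congrArg List.length (popA_append_remA x st)
    simp only [List.length_append] at h
    have := ih (x :: remA x st)
    simp only [outsL, finSt, List.length_append, List.length_cons] at *
    omega

lemma remA_len_le (x : ℕ) (st : List ℕ) : (remA x st).length ≤ st.length := by
  have h := congrArg List.length (popA_append_remA x st)
  simp only [List.length_append] at h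
  omega
/-- No consecutive occurrence of 231: forbidden consecutive triple `x, y, z` with `z < x < y`. -/
def NoC : List ℕ → Prop
  | x :: y :: z :: t => ¬(z < x ∧ x < y) ∧ NoC (y :: z :: t)
  | _ => True

lemma NoC_tail {a : ℕ} {l : List ℕ} (h : NoC (a :: l)) : NoC l := by
  match l with
  | [] => trivial
  | [y] => trivial
  | y :: z :: t => exact h.2

lemma NoC_suffix {s l : List ℕ} (h : NoC l) (hs : s.IsSuffix l) : NoC s := by
  obtain ⟨c, rfl⟩ := hs
  induction c with
  | nil => exact h
  | cons a c ih => exact ih (NoC_tail h)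

lemma NoC_short : ∀ {l : List ℕ}, l.length ≤ 2 → NoC l := by
  intro l hl
  match l with
  | [] => trivial
  | [a] => trivial
  | [a, b] => trivial

lemma noC_push {x : ℕ} : ∀ {st : List ℕ}, NoC st → NoC (x :: remA x st) := by
  intro st
  induction st with
  | nil => intro _; trivial
  | cons y t ih =>
    intro h
    match t with
    | [] => trivial
    | z :: s =>
      by_cases hc : z < x ∧ x < y
      · rw [remA, if_pos hc]
        exact ih (NoC_tail h)
      · rw [remA, if_neg hc]
        exact ⟨hc, h⟩

lemma noC_finSt : ∀ (l : List ℕ) {st : List ℕ}, NoC st → NoC (finSt l st) := by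
  intro l
  induction l with
  | nil => intro st h; exact h
  | cons x l ih =>
    intro st h
    rw [finSt]
    exact ih (noC_push h)

lemma chain2 {f : ℕ} (hf : f ≤ 2) (v : List ℕ) :
    ∀ (m : List ℕ) (a b : ℕ) (s : List ℕ),
      3 ≤ a → 3 ≤ b → a < b → (∀ x ∈ m, 3 ≤ x) → (a :: b :: m).Nodup →
      NoC (a :: b :: m ++ f :: v) →
      (remA f (finSt m (b :: a :: s))).length + 1 ≤ m.length + (b :: a :: s).length := by
  intro m
  induction m with
  | nil =>
    intro a b s ha hb hab _ _ hnoc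
    exact absurd ⟨by omega, hab⟩ hnoc.1
  | cons x m ih =>
    intro a b s ha hb hab hm hnd hnoc
    have hx : 3 ≤ x := hm x (by simp)
    by_cases hc : a < x ∧ x < b
    · -- a pop happens while inserting x; bound by lengths
      have l1 := len_eq (x :: m) (b :: a :: s)
      have l2 : 1 ≤ (outsL (x :: m) (b :: a :: s)).length := by
        rw [outsL, popA, if_pos hc]
        simp
      have l3 := remA_len_le f (finSt (x :: m) (b :: a :: s))
      simp only [List.length_cons] at *
      omega
    · -- no pop: x must be larger than b
      have hxb : b < x := by
        rcases Nat.lt_trichotomy x b with h | h | h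
        · exfalso
          have hxa : x < a := by
            rcases Nat.lt_trichotomy x a with h' | h' | h'
            · exact h'
            · exact absurd h'.symm (by simp [List.nodup_cons] at hnd; tauto)
            · exact absurd ⟨h', h⟩ hc
          exact hnoc.1 ⟨hxa, hab⟩
        · exact absurd h.symm (by simp [List.nodup_cons] at hnd; tauto)
        · exact h
      have hrem : remA x (b :: a :: s) = b :: a :: s := by
        rw [remA, if_neg hc]
      have hfin : finSt (x :: m) (b :: a :: s) = finSt m (x :: b :: a :: s) := by
        rw [finSt, hrem]
      rw [hfin]
      have := ih b x (a :: s) hb hx hxb (fun y hy => hm y (by simp [hy]))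
        (by
          have : (b :: x :: m).Sublist (a :: b :: x :: m) := by
            exact (List.sublist_cons_self a _)
          exact this.nodup hnd)
        (NoC_tail hnoc)
      simp only [List.length_cons] at *
      omega

lemma chain {e f : ℕ} (hef : (e = 1 ∧ f = 2) ∨ (e = 2 ∧ f = 1)) (v : List ℕ)
    (m : List ℕ) (hm : m ≠ []) (h3 : ∀ x ∈ m, 3 ≤ x) (hnd : m.Nodup)
    (hnoc : NoC (e :: m ++ f :: v)) :
    (remA f (finSt m [e])).length ≤ m.length := by
  match m with
  | [x] =>
    have hx : 3 ≤ x := h3 x (by simp)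
    have hfin : finSt [x] [e] = [x, e] := by
      simp [finSt, remA]
    rw [hfin]
    rcases hef with ⟨rfl, rfl⟩ | ⟨rfl, rfl⟩
    · -- e = 1, f = 2 : 2 pops x
      have : remA 2 [x, 1] = [1] := by
        rw [remA, if_pos ⟨by omega, by omega⟩]
        rfl
      simp [this]
    · -- e = 2, f = 1 : contradiction with NoC (2 :: x :: 1 :: v)
      exact absurd ⟨by omega, by omega⟩ hnoc.1
  | x :: y :: m' =>
    have hx : 3 ≤ x := h3 x (by simp)
    have hy : 3 ≤ y := h3 y (by simp)
    have he : e ≤ 2 := by rcases hef with ⟨rfl, _⟩ | ⟨rfl, _⟩ <;> omega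
    have hf : f ≤ 2 := by rcases hef with ⟨_, rfl⟩ | ⟨_, rfl⟩ <;> omega
    have hremx : remA x [e] = [e] := by simp [remA]
    have hfin1 : finSt (x :: y :: m') [e] = finSt (y :: m') [x, e] := by
      rw [finSt, hremx]
    by_cases hc : e < y ∧ y < x
    · -- pop while inserting y
      have l1 := len_eq (x :: y :: m') [e]
      have hpy : popA y [x, e] = [x] := by
        rw [popA, if_pos hc]
        simp [popA]
      have e1 : outsL (x :: y :: m') [e]
          = popA x [e] ++ (popA y [x, e] ++ outsL m' (y :: remA y [x, e])) := by
        rw [outsL, outsL, hremx]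
      have l2 : 1 ≤ (outsL (x :: y :: m') [e]).length := by
        rw [e1, hpy]; simp only [List.length_append, List.length_cons]; omega
      have l3 := remA_len_le f (finSt (x :: y :: m') [e])
      simp only [List.length_cons, List.length_nil] at *
      omega
    · have hxy : x < y := by
        rcases Nat.lt_trichotomy x y with h | h | h
        · exact h
        · exact absurd h (by simp [List.nodup_cons] at hnd; tauto)
        · exact absurd ⟨by omega, h⟩ hc
      have hfin2 : finSt (y :: m') [x, e] = finSt m' (y :: x :: [e]) := by
        rw [finSt, remA, if_neg hc]
      have := chain2 hf v m' x y [e] hx hy hxy (fun z hz => h3 z (by simp [hz]))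
        hnd (NoC_tail hnoc)
      rw [hfin1, hfin2]
      simp only [List.length_cons, List.length_nil] at *
      omega
lemma struct {e f : ℕ} (hef : (e = 1 ∧ f = 2) ∨ (e = 2 ∧ f = 1))
    (u m v : List ℕ) (h3u : ∀ a ∈ u, 3 ≤ a) (h3m : ∀ a ∈ m, 3 ≤ a)
    (h3v : ∀ a ∈ v, 3 ≤ a) (hndm : m.Nodup) :
    ∃ A W' B, SC231 (u ++ e :: (m ++ f :: v)) = A ++ f :: (W' ++ e :: B) ∧
      (∀ a ∈ A, 3 ≤ a) ∧ (∀ a ∈ W', 3 ≤ a) ∧ W'.length ≤ m.length ∧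
      (NoC (e :: (m ++ f :: v)) → m ≠ [] → W'.length < m.length) := by
  have he1 : 1 ≤ e := by rcases hef with ⟨rfl, _⟩ | ⟨rfl, _⟩ <;> omega
  have he2 : e ≤ 2 := by rcases hef with ⟨rfl, _⟩ | ⟨rfl, _⟩ <;> omega
  have hf1 : 1 ≤ f := by rcases hef with ⟨_, rfl⟩ | ⟨_, rfl⟩ <;> omega
  have hf2 : f ≤ 2 := by rcases hef with ⟨_, rfl⟩ | ⟨_, rfl⟩ <;> omega
  set S := finSt u [] with hS
  have hS3 : ∀ a ∈ S, 3 ≤ a := by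
    intro a ha
    have := mem_finSt ha
    simp only [List.append_nil] at this
    exact h3u a this
  set R := remA e S with hR
  have hR3 : ∀ a ∈ R, 3 ≤ a := fun a ha => hS3 a (mem_remA ha)
  have hR1 : ∀ a ∈ R, 1 ≤ a := fun a ha => by have := hR3 a ha; omega
  -- splitting off u
  have eq1 : SC231 (u ++ e :: (m ++ f :: v)) =
      outsL u [] ++ (outsL (e :: (m ++ f :: v)) S ++ finSt (e :: (m ++ f :: v)) S) := by
    rw [SC231_eq, outsL_append, finSt_append, ← hS]
    simp
  -- processing e
  have eq2 : outsL (e :: (m ++ f :: v)) S = popA e S ++ outsL (m ++ f :: v) (e :: R) := by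
    rw [outsL]
  have eq3 : finSt (e :: (m ++ f :: v)) S = finSt (m ++ f :: v) (e :: R) := by
    rw [finSt]
  -- split below e
  have split1 := split_lemma he2 hR1 (m ++ f :: v) []
  simp only [List.nil_append] at split1
  -- processing m on [e]
  obtain ⟨W, hW, hWm⟩ := keeps he2 m []
  simp only [List.nil_append, List.append_nil] at hW hWm
  have hW3 : ∀ a ∈ W, 3 ≤ a := fun a ha => h3m a (hWm a ha)
  have eq4 : outsL (m ++ f :: v) [e] = outsL m [e] ++ outsL (f :: v) (W ++ [e]) := by
    rw [outsL_append, hW]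
  have eq5 : finSt (m ++ f :: v) [e] = finSt (f :: v) (W ++ [e]) := by
    rw [finSt_append, hW]
  -- processing f
  obtain ⟨W', hW', hWsub⟩ := remA_block (r := []) he2 (by simp) f W
  have hW'3 : ∀ a ∈ W', 3 ≤ a := fun a ha => hW3 a (hWsub.subset ha)
  have eq6 : outsL (f :: v) (W ++ [e]) =
      popA f (W ++ [e]) ++ outsL v (f :: (W' ++ [e])) := by
    rw [outsL, hW']
  have eq7 : finSt (f :: v) (W ++ [e]) = finSt v (f :: (W' ++ [e])) := by
    rw [finSt, hW']
  -- split below f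
  have hr1 : ∀ a ∈ W' ++ [e], 1 ≤ a := by
    intro a ha
    rcases List.mem_append.1 ha with h | h
    · have := hW'3 a h; omega
    · simp at h; omega
  have split2 := split_lemma hf2 hr1 v []
  simp only [List.nil_append] at split2
  obtain ⟨V, hV, hVm⟩ := keeps hf2 v []
  simp only [List.nil_append, List.append_nil] at hV hVm
  have hV3 : ∀ a ∈ V, 3 ≤ a := fun a ha => h3v a (hVm a ha)
  -- lengths
  have hWlen : W.length ≤ m.length := by
    have := len_eq m [e]
    rw [hW] at this
    simp only [List.length_append, List.length_cons, List.length_nil] at this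
    omega
  have hW'len : W'.length ≤ W.length := hWsub.length_le
  -- assemble
  refine ⟨outsL u [] ++ (popA e S ++ (outsL m [e] ++ (popA f (W ++ [e]) ++
      (outsL v [f] ++ V)))), W', R, ?_, ?_, hW'3, le_trans hW'len hWlen, ?_⟩
  · rw [eq1, eq2, eq3, split1.2, split1.1, eq4, eq5, eq6, eq7, split2.2, split2.1, hV]
    simp
  · intro a ha
    simp only [List.mem_append] at ha
    have hu1 : ∀ a ∈ u, 1 ≤ a := fun a ha => by have := h3u a ha; omega
    have hS1 : ∀ a ∈ S, 1 ≤ a := fun a ha => by have := hS3 a ha; omega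
    have hm1 : ∀ a ∈ m, 1 ≤ a := fun a ha => by have := h3m a ha; omega
    have hv1 : ∀ a ∈ v, 1 ≤ a := fun a ha => by have := h3v a ha; omega
    rcases ha with h | h | h | h | h | h
    · exact outsL_ge3 u [] hu1 (by simp) a h
    · exact popA_ge3 hS1 a h
    · exact outsL_ge3 m [e] hm1 (by simpa using he1) a h
    · refine popA_ge3 ?_ a h
      intro b hb
      rcases List.mem_append.1 hb with h' | h'
      · have := hW3 b h'; omega
      · simp at h'; omega
    · exact outsL_ge3 v [f] hv1 (by simpa using hf1) a h
    · exact hV3 a h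
  · intro hnoc hm
    have := chain hef v m hm h3m hndm hnoc
    rw [hW, hW'] at this
    simp only [List.length_append, List.length_cons, List.length_nil] at this
    omega
/-- the positional distance between the values 1 and 2 -/
def Dgap (q : List ℕ) : ℕ :=
  (q.idxOf 1 - q.idxOf 2) + (q.idxOf 2 - q.idxOf 1)

lemma adj_iff_D {q : List ℕ} : Adj12 q ↔ Dgap q = 1 := by
  unfold Adj12 Dgap
  omega

lemma idx_split {c : ℕ} {A t : List ℕ} (h : c ∉ A) :
    (A ++ c :: t).idxOf c = A.length := by
  rw [List.idxOf_append_of_notMem h, List.idxOf_cons_self]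
  omega

lemma D_pos {q : List ℕ} (hnd : q.Nodup) (h1 : (1:ℕ) ∈ q) (h2 : (2:ℕ) ∈ q) :
    1 ≤ Dgap q := by
  have : q.idxOf 1 ≠ q.idxOf 2 := by
    intro h
    have := (List.idxOf_inj h1 (y := 2)).1 h
    omega
  unfold Dgap
  omega

lemma D_decomp {e f : ℕ} (hef : (e = 1 ∧ f = 2) ∨ (e = 2 ∧ f = 1))
    {u m v : List ℕ} (hue : e ∉ u) (huf : f ∉ u) (hme : e ∉ m) (hmf : f ∉ m) :
    Dgap (u ++ e :: (m ++ f :: v)) = m.length + 1 := by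
  have h1 : (u ++ e :: (m ++ f :: v)).idxOf e = u.length := idx_split hue
  have h2 : (u ++ e :: (m ++ f :: v)).idxOf f = u.length + m.length + 1 := by
    have he' : f ∉ u ++ e :: m := by
      simp only [List.mem_append, List.mem_cons]
      rcases hef with ⟨rfl, rfl⟩ | ⟨rfl, rfl⟩ <;> push_neg <;>
        exact ⟨huf, by omega, hmf⟩
    have : u ++ e :: (m ++ f :: v) = (u ++ e :: m) ++ f :: v := by simp
    rw [this, idx_split he']
    simp
    omega
  unfold Dgap
  rcases hef with ⟨rfl, rfl⟩ | ⟨rfl, rfl⟩ <;> rw [h1, h2] <;> omega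

/-- decomposition of a list containing 1 and 2 -/
lemma decomp {p : List ℕ} (h1 : (1:ℕ) ∈ p) (h2 : (2:ℕ) ∈ p) :
    ∃ e f u m v, ((e = 1 ∧ f = 2) ∨ (e = 2 ∧ f = 1)) ∧
      p = u ++ e :: (m ++ f :: v) := by
  obtain ⟨s, t, rfl⟩ := List.append_of_mem h1
  rcases List.mem_append.1 h2 with hs | ht
  · obtain ⟨u, m, rfl⟩ := List.append_of_mem hs
    exact ⟨2, 1, u, m, t, Or.inr ⟨rfl, rfl⟩, by simp⟩
  · have h2t : (2:ℕ) ∈ t := by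
      rcases List.mem_cons.1 ht with h | h
      · omega
      · exact h
    obtain ⟨m, v, rfl⟩ := List.append_of_mem h2t
    exact ⟨1, 2, s, m, v, Or.inl ⟨rfl, rfl⟩, rfl⟩

lemma nodup_parts {u m v : List ℕ} {e f : ℕ} (h : (u ++ e :: (m ++ f :: v)).Nodup) :
    e ∉ u ∧ f ∉ u ∧ e ∉ m ∧ f ∉ m ∧ e ∉ v ∧ f ∉ v ∧ e ≠ f ∧ m.Nodup := by
  simp only [List.nodup_append, List.nodup_cons, List.mem_append, List.mem_cons,
    List.disjoint_cons_right, List.disjoint_append_right] at h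
  push_neg at h
  refine ⟨?_, ?_, ?_, ?_, ?_, ?_, ?_, ?_⟩ <;> grind

lemma not_mem_left_of_nodup {s t : List ℕ} {e : ℕ} (h : (s ++ e :: t).Nodup) :
    e ∉ s := by
  intro hm
  rw [List.nodup_append] at h
  exact h.2.2 e hm e (by simp) rfl

lemma unique_split {e : ℕ} {q s₁ t₁ s₂ t₂ : List ℕ} (_hnd : q.Nodup)
    (hq1 : q = s₁ ++ e :: t₁) (hq2 : q = s₂ ++ e :: t₂) : t₁ = t₂ := by
  have e1 : e ∉ s₁ := not_mem_left_of_nodup (hq1 ▸ _hnd)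
  have e2 : e ∉ s₂ := not_mem_left_of_nodup (hq2 ▸ _hnd)
  have hlen : s₁.length = s₂.length := by
    have i1 : q.idxOf e = s₁.length := by rw [hq1]; exact idx_split e1
    have i2 : q.idxOf e = s₂.length := by rw [hq2]; exact idx_split e2
    omega
  have := List.append_inj (hq1.symm.trans hq2) hlen
  exact (List.cons.injEq .. ▸ this.2).2
def Good (q : List ℕ) : Prop :=
  ∃ O F, q = O ++ F ∧ NoC F ∧ (1:ℕ) ∉ O ∧ (2:ℕ) ∉ O

lemma good_SC231 (q : List ℕ) (hq1 : ∀ a ∈ q, 1 ≤ a) : Good (SC231 q) := by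
  refine ⟨outsL q [], finSt q [], SC231_eq q, noC_finSt q trivial, ?_, ?_⟩
  · intro hm
    have := outsL_ge3 q [] hq1 (by simp) 1 hm
    omega
  · intro hm
    have := outsL_ge3 q [] hq1 (by simp) 2 hm
    omega

lemma good_noc {q u w : List ℕ} {e : ℕ} (hg : Good q) (hnd : q.Nodup)
    (hq : q = u ++ e :: w) (he : e = 1 ∨ e = 2) : NoC (e :: w) := by
  obtain ⟨O, F, rfl, hF, h1, h2⟩ := hg
  have heO : e ∉ O := by rcases he with rfl | rfl <;> assumption
  have heF : e ∈ F := by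
    have : e ∈ O ++ F := by rw [hq]; simp
    rcases List.mem_append.1 this with h | h
    · exact absurd h heO
    · exact h
  obtain ⟨c, d, rfl⟩ := List.append_of_mem heF
  have hw : w = d := unique_split hnd hq (List.append_assoc O c (e :: d)).symm
  subst hw
  exact NoC_suffix hF ⟨c, rfl⟩

/-- facts from being a permutation of {1,…,n} -/
lemma perm_facts {n : ℕ} {q : List ℕ} (hq : IsPermOf n q) :
    q.Nodup ∧ (∀ a ∈ q, 1 ≤ a) ∧ q.length = n := by
  refine ⟨hq.symm.nodup (List.nodup_range' (s := 1) (n := n)), ?_, hq.length_eq.trans (by simp)⟩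
  intro a ha
  have := hq.subset ha
  obtain ⟨i, hi, rfl⟩ := List.mem_range'.1 this
  omega

lemma one_mem {n : ℕ} {q : List ℕ} (hq : IsPermOf n q) (hn : 1 ≤ n) : (1:ℕ) ∈ q := by
  rw [hq.mem_iff, List.mem_range']
  exact ⟨0, by omega, by omega⟩

lemma two_mem {n : ℕ} {q : List ℕ} (hq : IsPermOf n q) (hn : 2 ≤ n) : (2:ℕ) ∈ q := by
  rw [hq.mem_iff, List.mem_range']
  exact ⟨1, by omega, by omega⟩

lemma isPermOf_SC231 {n : ℕ} {q : List ℕ} (hq : IsPermOf n q) :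
    IsPermOf n (SC231 q) := (SC231_perm q).trans hq

/-- the main step: the gap does not increase, and strictly decreases for good inputs -/
lemma step {n : ℕ} (hn : 2 ≤ n) {q : List ℕ} (hq : IsPermOf n q) :
    Dgap (SC231 q) ≤ Dgap q ∧ (Good q → 2 ≤ Dgap q → Dgap (SC231 q) < Dgap q) := by
  obtain ⟨hnd, hq1, hlen⟩ := perm_facts hq
  obtain ⟨e, f, u, m, v, hef, hdec⟩ := decomp (one_mem hq (by omega)) (two_mem hq hn)
  obtain ⟨hue, huf, hme, hmf, hve, hvf, hefne, hndm⟩ := nodup_parts (hdec ▸ hnd)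
  have h12 : ∀ a ∈ q, a ≠ e → a ≠ f → 3 ≤ a := by
    intro a ha hae haf
    have h1 := hq1 a ha
    rcases hef with ⟨rfl, rfl⟩ | ⟨rfl, rfl⟩ <;> omega
  have h3u : ∀ a ∈ u, 3 ≤ a := by
    intro a ha
    refine h12 a (by rw [hdec]; simp [ha]) ?_ ?_ <;> rintro rfl <;> tauto
  have h3m : ∀ a ∈ m, 3 ≤ a := by
    intro a ha
    refine h12 a (by rw [hdec]; simp [ha]) ?_ ?_ <;> rintro rfl <;> tauto
  have h3v : ∀ a ∈ v, 3 ≤ a := by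
    intro a ha
    refine h12 a (by rw [hdec]; simp [ha]) ?_ ?_ <;> rintro rfl <;> tauto
  obtain ⟨A, W', B, hSC, hA3, hW'3, hW'len, hstrict⟩ :=
    struct hef u m v h3u h3m h3v hndm
  have hDq : Dgap q = m.length + 1 := by rw [hdec]; exact D_decomp hef hue huf hme hmf
  have hAe : e ∉ A := by
    intro hm'
    have := hA3 e hm'
    rcases hef with ⟨rfl, _⟩ | ⟨rfl, _⟩ <;> omega
  have hAf : f ∉ A := by
    intro hm'
    have := hA3 f hm'
    rcases hef with ⟨_, rfl⟩ | ⟨_, rfl⟩ <;> omega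
  have hW'e : e ∉ W' := by
    intro hm'
    have := hW'3 e hm'
    rcases hef with ⟨rfl, _⟩ | ⟨rfl, _⟩ <;> omega
  have hW'f : f ∉ W' := by
    intro hm'
    have := hW'3 f hm'
    rcases hef with ⟨_, rfl⟩ | ⟨_, rfl⟩ <;> omega
  have hfe : (f = 1 ∧ e = 2) ∨ (f = 2 ∧ e = 1) := by tauto
  have hDq' : Dgap (SC231 q) = W'.length + 1 := by
    rw [hdec, hSC]
    exact D_decomp hfe hAf hAe hW'f hW'e
  constructor
  · omega
  · intro hg hD2
    have hm : m ≠ [] := by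
      intro hnil
      rw [hnil] at hDq
      simp at hDq
      omega
    have hnoc : NoC (e :: (m ++ f :: v)) := by
      refine good_noc hg hnd hdec ?_
      rcases hef with ⟨rfl, _⟩ | ⟨rfl, _⟩ <;> simp
    have := hstrict hnoc hm
    omega

lemma key {n : ℕ} (hn : 2 ≤ n) : ∀ (j : ℕ) (q : List ℕ), IsPermOf n q → Good q →
    Dgap q ≤ j + 1 → Dgap (SC231^[j] q) = 1 := by
  intro j
  induction j with
  | zero =>
    intro q hq hg hD
    obtain ⟨hnd, hq1, hlen⟩ := perm_facts hq
    have := D_pos hnd (one_mem hq (by omega)) (two_mem hq hn)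
    simpa using by omega
  | succ j ih =>
    intro q hq hg hD
    rw [Function.iterate_succ_apply]
    have hstep := step hn hq
    refine ih (SC231 q) (isPermOf_SC231 hq) (good_SC231 q (perm_facts hq).2.1) ?_
    by_cases h2 : 2 ≤ Dgap q
    · have := hstep.2 hg h2
      omega
    · have := hstep.1
      omega
end SCwork

open SCwork in
/-- If `1` and `2` are not adjacent in a permutation `p` of `{1,…,n}`, then after at most
`n - 1` applications of `SC_231` they become adjacent. -/
theorem adj12_after_iterates (n : ℕ) (hn : 1 ≤ n) (p : List ℕ) (hp : IsPermOf n p)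
    (h : ¬ Adj12 p) : Adj12 (SC231^[n - 1] p) := by
  by_cases hn2 : 2 ≤ n
  · obtain ⟨hnd, hq1, hlen⟩ := perm_facts hp
    have hDn : Dgap p ≤ n - 1 := by
      obtain ⟨e, f, u, m, v, hef, hdec⟩ :=
        decomp (one_mem hp (by omega)) (two_mem hp hn2)
      obtain ⟨hue, huf, hme, hmf, hve, hvf, hefne, hndm⟩ := nodup_parts (hdec ▸ hnd)
      have hD : Dgap p = m.length + 1 := by
        rw [hdec]; exact D_decomp hef hue huf hme hmf
      have := congrArg List.length hdec
      simp only [hlen, List.length_append, List.length_cons] at this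
      omega
    have hq' : IsPermOf n (SC231 p) := isPermOf_SC231 hp
    have hkey : Dgap (SC231^[n-2] (SC231 p)) = 1 := by
      refine key hn2 (n-2) (SC231 p) hq' (good_SC231 p hq1) ?_
      have := (step hn2 hp).1
      omega
    rw [adj_iff_D]
    have hit : SC231^[n-1] p = SC231^[n-2] (SC231 p) := by
      rw [← Function.iterate_succ_apply]
      congr 1
      omega
    rw [hit]
    exact hkey
  · exfalso
    apply h
    have hn1 : n = 1 := by omega
    subst hn1
    have hp' : p.Perm [1] := by
      have : List.range' 1 1 = [1] := rfl
      rw [IsPermOf, this] at hp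
      exact hp
    have : p = [1] := List.Perm.eq_singleton hp'
    rw [this]
    unfold Adj12
    decide
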